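/- There exists a nonrecursive causal model all of whose interventions have unique solutions: let S = (∅, {X, Y}, R) with R(X) = R(Y) = {−1, 0, 1}, and let T be the causal model with F_X(y) = y and F_Y(x) = −x. Then T is not recursive, yet T ∈ T_uniq(S); in particular, the equations of T have the unique solution X = 0, Y = 0, the equations of T_{X←x} have the unique solution Y = −x, and the equations of T_{Y←y} have the unique solution X = y. -/

import Mathlib

/-- A signature `S = (U, V, R)`: finite (disjoint) sets of exogenous variables `U` and
endogenous variables `V`, together with a nonempty finite set (here: type) of possible
values for each variable. -/
structure Signature where
  U : Type
  V : Type
  uFin : Fintype U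
  vFin : Fintype V
  vDecEq : DecidableEq V
  valU : U → Type
  valV : V → Type
  valUFin : ∀ u, Fintype (valU u)
  valVFin : ∀ X, Fintype (valV X)
  valUNonempty : ∀ u, Nonempty (valU u)
  valVNonempty : ∀ X, Nonempty (valV X)

attribute [instance] Signature.uFin Signature.vFin Signature.vDecEq
  Signature.valUFin Signature.valVFin Signature.valUNonempty Signature.valVNonempty

/-- The standing assumption `|R(Y)| ≥ 2` for every variable `Y`. -/
def Signature.Standard (S : Signature) : Prop :=
  (∀ u, 2 ≤ Fintype.card (S.valU u)) ∧ (∀ X, 2 ≤ Fintype.card (S.valV X))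

/-- A setting `u⃗` of values for all the exogenous variables. -/
abbrev Signature.Context (S : Signature) : Type := ∀ u : S.U, S.valU u

/-- An assignment of values to all the endogenous variables. -/
abbrev Signature.Assignment (S : Signature) : Type := ∀ X : S.V, S.valV X

/-- An intervention `X⃗ ← x⃗`: a vector of distinct endogenous variables together with
values for them, encoded as a partial assignment. -/
abbrev Signature.Intervention (S : Signature) : Type := ∀ X : S.V, Option (S.valV X)

/-- The empty intervention (`[true]`). -/
def Signature.emptyInt (S : Signature) : S.Intervention := fun _ => none

/-- Extend an intervention by additionally setting `W` to `w`. -/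
def intUpdate {S : Signature} (g : S.Intervention) (W : S.V) (w : S.valV W) :
    S.Intervention :=
  fun X => if h : X = W then some (cast (congrArg S.valV h).symm w) else g X

/-- A causal model `T = (S, F)` over the signature `S`. -/
structure CausalModel (S : Signature) where
  F : ∀ X : S.V, S.Context → (∀ Y : S.V, Y ≠ X → S.valV Y) → S.valV X

/-- `v` is a solution of `T_{X⃗ ← x⃗}(u⃗)` (intervention encoded by `g`): intervened
variables take their set values, and every other variable satisfies its equation. -/
def CausalModel.IsSolution {S : Signature} (T : CausalModel S) (g : S.Intervention)
    (u : S.Context) (v : S.Assignment) : Prop :=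
  ∀ X : S.V,
    (∀ x, g X = some x → v X = x) ∧
    (g X = none → v X = T.F X u fun Y _ => v Y)

/-- `T ∈ T_uniq(S)`: the equations of `T_{X⃗ ← x⃗}(u⃗)` have a unique solution, for every
intervention and every context. -/
def CausalModel.UniqueSolutions {S : Signature} (T : CausalModel S) : Prop :=
  ∀ (g : S.Intervention) (u : S.Context), ∃! v : S.Assignment, T.IsSolution g u v

/-- `T ∈ T_rec(S)`: there is a (strict) total order `≺` on `V` such that `F_X` is
independent of the value of `Y` whenever `X ≺ Y`. -/
def CausalModel.Recursive {S : Signature} (T : CausalModel S) : Prop :=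
  ∃ r : S.V → S.V → Prop, IsStrictTotalOrder S.V r ∧
    ∀ (X : S.V) (u : S.Context) (w w' : ∀ Y : S.V, Y ≠ X → S.valV Y),
      (∀ (Y : S.V) (h : Y ≠ X), ¬ r X Y → w Y h = w' Y h) →
      T.F X u w = T.F X u w'

/-- Boolean combinations of atoms of the form `X(u⃗) = x`. -/
inductive IForm (S : Signature) : Type where
  | atom : (X : S.V) → S.Context → S.valV X → IForm S
  | not : IForm S → IForm S
  | and : IForm S → IForm S → IForm S
  | or : IForm S → IForm S → IForm S

namespace IForm

variable {S : Signature}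

/-- The settings `u⃗` of the exogenous variables mentioned in a formula. -/
def mentions : IForm S → Set S.Context
  | atom _ u _ => {u}
  | not φ => φ.mentions
  | and φ ψ => φ.mentions ∪ ψ.mentions
  | or φ ψ => φ.mentions ∪ ψ.mentions

/-- The endogenous variables appearing in a formula. -/
def vars : IForm S → Set S.V
  | atom X _ _ => {X}
  | not φ => φ.vars
  | and φ ψ => φ.vars ∪ ψ.vars
  | or φ ψ => φ.vars ∪ ψ.vars

/-- Evaluate a Boolean combination of atoms, where the atoms mentioning `u⃗` are
evaluated in the assignment `σ u⃗`. -/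
def eval (σ : S.Context → S.Assignment) : IForm S → Prop
  | atom X u x => σ u X = x
  | not φ => ¬ φ.eval σ
  | and φ ψ => φ.eval σ ∧ ψ.eval σ
  | or φ ψ => φ.eval σ ∨ ψ.eval σ

def imp (φ ψ : IForm S) : IForm S := or (not φ) ψ

/-- `φ ∧ ψ₁ ∧ … ∧ ψₙ`. -/
def conj (φ : IForm S) : List (IForm S) → IForm S
  | [] => φ
  | ψ :: l => and φ (conj ψ l)

/-- `φ ∨ ψ₁ ∨ … ∨ ψₙ`. -/
def disj (φ : IForm S) : List (IForm S) → IForm S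
  | [] => φ
  | ψ :: l => or φ (disj ψ l)

/-- Evaluation under an arbitrary truth assignment to the atoms. -/
def pEval (val : ∀ X : S.V, S.Context → S.valV X → Prop) : IForm S → Prop
  | atom X u x => val X u x
  | not φ => ¬ φ.pEval val
  | and φ ψ => φ.pEval val ∧ ψ.pEval val
  | or φ ψ => φ.pEval val ∨ ψ.pEval val

/-- An instance of a propositional tautology. -/
def Tautology (φ : IForm S) : Prop := ∀ val, φ.pEval val

theorem mentions_nonempty : ∀ φ : IForm S, φ.mentions.Nonempty
  | atom _ u _ => ⟨u, rfl⟩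
  | not φ => mentions_nonempty φ
  | and φ _ => (mentions_nonempty φ).imp fun _ h => Set.mem_union_left _ h
  | or φ _ => (mentions_nonempty φ).imp fun _ h => Set.mem_union_left _ h

end IForm

/-- `T ⊨ [X⃗ ← x⃗] φ` : for every choice, for each mentioned setting `u⃗`, of a solution
of `T_{X⃗ ← x⃗}(u⃗)`, the formula `φ` evaluates to true. -/
def CausalModel.boxSat {S : Signature} (T : CausalModel S) (g : S.Intervention)
    (φ : IForm S) : Prop :=
  ∀ σ : S.Context → S.Assignment,
    (∀ u ∈ φ.mentions, T.IsSolution g u (σ u)) → φ.eval σ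

/-- The language `L⁺(S)`: Boolean combinations of basic causal formulas `[Y⃗ ← y⃗] φ`. -/
inductive LPlus (S : Signature) : Type where
  | box : S.Intervention → IForm S → LPlus S
  | not : LPlus S → LPlus S
  | and : LPlus S → LPlus S → LPlus S
  | or : LPlus S → LPlus S → LPlus S

namespace LPlus

variable {S : Signature}

/-- Truth of a causal formula in a causal model. -/
def sat : LPlus S → CausalModel S → Prop
  | box g φ, T => T.boxSat g φ
  | not φ, T => ¬ φ.sat T
  | and φ ψ, T => φ.sat T ∧ ψ.sat T
  | or φ ψ, T => φ.sat T ∨ ψ.sat T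

/-- `⟨X⃗ ← x⃗⟩ φ` abbreviates `¬ [X⃗ ← x⃗] ¬ φ`. -/
def dia (g : S.Intervention) (φ : IForm S) : LPlus S := not (box g (IForm.not φ))

def imp (φ ψ : LPlus S) : LPlus S := or (not φ) ψ

def iff (φ ψ : LPlus S) : LPlus S := and (imp φ ψ) (imp ψ φ)

def conj (φ : LPlus S) : List (LPlus S) → LPlus S
  | [] => φ
  | ψ :: l => and φ (conj ψ l)

def disj (φ : LPlus S) : List (LPlus S) → LPlus S
  | [] => φ
  | ψ :: l => or φ (disj ψ l)

/-- Membership in the sublanguage `L_uniq(S)`: Boolean combinations of formulas of the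
form `[Y⃗ ← y⃗](X(u⃗) = x)`. -/
def InLuniq : LPlus S → Prop
  | box _ φ => ∃ (X : S.V) (u : S.Context) (x : S.valV X), φ = IForm.atom X u x
  | not φ => φ.InLuniq
  | and φ ψ => φ.InLuniq ∧ ψ.InLuniq
  | or φ ψ => φ.InLuniq ∧ ψ.InLuniq

/-- Evaluation under an arbitrary truth assignment to the basic causal formulas. -/
def pEval (val : S.Intervention → IForm S → Prop) : LPlus S → Prop
  | box g φ => val g φ
  | not φ => ¬ φ.pEval val
  | and φ ψ => φ.pEval val ∧ ψ.pEval val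
  | or φ ψ => φ.pEval val ∨ ψ.pEval val

/-- An instance of a propositional tautology. -/
def Tautology (φ : LPlus S) : Prop := ∀ val, φ.pEval val

/-- The endogenous variables appearing in a causal formula (including the variables
set by its interventions). -/
def vars : LPlus S → Set S.V
  | box g φ => {X | g X ≠ none} ∪ φ.vars
  | not φ => φ.vars
  | and φ ψ => φ.vars ∪ ψ.vars
  | or φ ψ => φ.vars ∪ ψ.vars

/-- The settings of the exogenous variables mentioned in a causal formula. -/
def contexts : LPlus S → Set S.Context
  | box _ φ => φ.mentions
  | not φ => φ.contexts
  | and φ ψ => φ.contexts ∪ ψ.contexts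
  | or φ ψ => φ.contexts ∪ ψ.contexts

theorem contexts_nonempty : ∀ φ : LPlus S, φ.contexts.Nonempty
  | box _ φ => φ.mentions_nonempty
  | not φ => contexts_nonempty φ
  | and φ _ => (contexts_nonempty φ).imp fun _ h => Set.mem_union_left _ h
  | or φ _ => (contexts_nonempty φ).imp fun _ h => Set.mem_union_left _ h

end LPlus

/-- `Y` affects `Z` in `T`: for some setting of the exogenous variables and of some
other endogenous variables, changing the value of `Y` changes the value of `Z`. -/
def CausalModel.Affects {S : Signature} (T : CausalModel S) (Y Z : S.V) : Prop :=
  Y ≠ Z ∧ ∃ (g : S.Intervention) (y : S.valV Y) (u : S.Context) (z z' : S.valV Z),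
    g Y = none ∧ g Z = none ∧ z ≠ z' ∧
    T.boxSat (intUpdate g Y y) (IForm.atom Z u z') ∧ T.boxSat g (IForm.atom Z u z)

/-- Provability from a set of axioms using modus ponens. -/
inductive Provable {S : Signature} (Ax : Set (LPlus S)) : LPlus S → Prop
  | ax : ∀ {φ}, φ ∈ Ax → Provable Ax φ
  | mp : ∀ {φ ψ}, Provable Ax (φ.imp ψ) → Provable Ax φ → Provable Ax ψ

/-- The value set `{-1, 0, 1}`. -/
abbrev V3 : Type := ↥({-1, 0, 1} : Finset ℤ)

/-- The signature `S = (∅, {X, Y}, R)` with `R(X) = R(Y) = {−1, 0, 1}`; `X` is the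
variable `0 : Fin 2`, `Y` is `1 : Fin 2`. -/
def sig5 : Signature where
  U := Empty
  V := Fin 2
  uFin := inferInstance
  vFin := inferInstance
  vDecEq := inferInstance
  valU := fun u => u.elim
  valV := fun _ => V3
  valUFin := fun u => u.elim
  valVFin := fun _ => inferInstance
  valUNonempty := fun u => u.elim
  valVNonempty := fun _ => ⟨⟨0, by decide⟩⟩

/-- The variable `X`. -/
def X5 : sig5.V := (0 : Fin 2)
/-- The variable `Y`. -/
def Y5 : sig5.V := (1 : Fin 2)

def neg5 (x : V3) : V3 :=
  ⟨-x.1, by have := x.2; simp only [Finset.mem_insert, Finset.mem_singleton] at this ⊢; omega⟩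

/-- The causal model with `F_X(y) = y` and `F_Y(x) = −x`. -/
def model5 : CausalModel sig5 where
  F := fun Z u w =>
    if h : Z = X5 then w Y5 (by rw [h]; decide)
    else neg5 (w X5 (Ne.symm h))

/-- The intervention setting just the variable `i` to `x`. -/
def setInt5 (i : sig5.V) (x : V3) : sig5.Intervention :=
  fun Z => if Z = i then some x else none

def zero5 : V3 := ⟨0, by decide⟩

/-- a nonrecursive causal model all of whose interventions have unique
solutions: `T` (with `F_X(y) = y`, `F_Y(x) = −x`) is not recursive, is in `T_uniq(S)`,
its equations have the unique solution `X = 0, Y = 0`, the equations of `T_{X←x}` have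
the unique solution `Y = −x` (and `X = x`), and the equations of `T_{Y←y}` have the
unique solution `X = y` (and `Y = y`). -/
lemma F_X5 (u : sig5.Context) (w : ∀ Y : sig5.V, Y ≠ X5 → sig5.valV Y) :
    model5.F X5 u w = w Y5 (by decide) := by simp [model5]; rfl

lemma F_Y5 (u : sig5.Context) (w : ∀ Y : sig5.V, Y ≠ Y5 → sig5.valV Y) :
    model5.F Y5 u w = neg5 (w X5 (by decide)) := by
  have h : ¬ (Y5 = X5) := by decide
  simp [model5, h]; rfl

lemma neg5_fix : ∀ x : V3, neg5 x = x ↔ x = zero5 := by decide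

lemma neg5_zero : neg5 zero5 = zero5 := by decide

lemma var_cases : ∀ Z : sig5.V, Z = X5 ∨ Z = Y5 := by decide

lemma asg_ext (v v' : sig5.Assignment) (h1 : v X5 = v' X5) (h2 : v Y5 = v' Y5) :
    v = v' := by
  funext i
  rcases var_cases i with rfl | rfl
  · exact h1
  · exact h2

def one5 : V3 := ⟨1, by decide⟩

lemma setInt5_same (i : sig5.V) (x : V3) : setInt5 i x i = some x := by simp [setInt5]; rfl

lemma setInt5_XY (x : V3) : setInt5 X5 x Y5 = none := by
  have : ¬ (Y5 = X5) := by decide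
  simp [setInt5, this]

lemma setInt5_YX (y : V3) : setInt5 Y5 y X5 = none := by
  have : ¬ (X5 = Y5) := by decide
  simp [setInt5, this]

lemma sol_empty (u : sig5.Context) (v : sig5.Assignment) :
    model5.IsSolution sig5.emptyInt u v ↔ (v X5 = zero5 ∧ v Y5 = zero5) := by
  constructor
  · intro h
    have hx := (h X5).2 rfl
    have hy := (h Y5).2 rfl
    rw [F_X5] at hx
    rw [F_Y5] at hy
    have hxx : neg5 (v X5) = v X5 := by rw [← hy, ← hx]
    have h0 : v X5 = zero5 := (neg5_fix _).1 hxx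
    exact ⟨h0, by rw [hy, h0, neg5_zero]⟩
  · rintro ⟨h1, h2⟩ Z
    refine ⟨fun z hz => by simp [Signature.emptyInt] at hz, fun _ => ?_⟩
    rcases var_cases Z with rfl | rfl
    · rw [F_X5, h1, h2]
    · rw [F_Y5, h2, h1, neg5_zero]

lemma sol_setX (u : sig5.Context) (x : V3) (v : sig5.Assignment) :
    model5.IsSolution (setInt5 X5 x) u v ↔ (v X5 = x ∧ v Y5 = neg5 x) := by
  constructor
  · intro h
    have hx := (h X5).1 x (setInt5_same X5 x)
    have hy := (h Y5).2 (setInt5_XY x)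
    rw [F_Y5] at hy
    exact ⟨hx, by rw [hy, hx]⟩
  · rintro ⟨h1, h2⟩ Z
    rcases var_cases Z with rfl | rfl
    · refine ⟨fun z hz => ?_, fun hn => ?_⟩
      · rw [setInt5_same] at hz
        injection hz with hz
        rw [h1, hz]
      · rw [setInt5_same] at hn
        cases hn
    · refine ⟨fun z hz => ?_, fun _ => ?_⟩
      · rw [setInt5_XY] at hz
        cases hz
      · rw [F_Y5, h2, h1]

lemma sol_setY (u : sig5.Context) (y : V3) (v : sig5.Assignment) :
    model5.IsSolution (setInt5 Y5 y) u v ↔ (v Y5 = y ∧ v X5 = y) := by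
  constructor
  · intro h
    have hy := (h Y5).1 y (setInt5_same Y5 y)
    have hx := (h X5).2 (setInt5_YX y)
    rw [F_X5] at hx
    exact ⟨hy, by rw [hx, hy]⟩
  · rintro ⟨h1, h2⟩ Z
    rcases var_cases Z with rfl | rfl
    · refine ⟨fun z hz => ?_, fun _ => ?_⟩
      · rw [setInt5_YX] at hz
        cases hz
      · rw [F_X5, h2, h1]
    · refine ⟨fun z hz => ?_, fun hn => ?_⟩
      · rw [setInt5_same] at hz
        injection hz with hz
        rw [h1, hz]
      · rw [setInt5_same] at hn
        cases hn

lemma sol_both (g : sig5.Intervention) (x y : V3) (hgx : g X5 = some x)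
    (hgy : g Y5 = some y) (u : sig5.Context) (v : sig5.Assignment) :
    model5.IsSolution g u v ↔ (v X5 = x ∧ v Y5 = y) := by
  constructor
  · intro h
    exact ⟨(h X5).1 x hgx, (h Y5).1 y hgy⟩
  · rintro ⟨h1, h2⟩ Z
    rcases var_cases Z with rfl | rfl
    · refine ⟨fun z hz => ?_, fun hn => ?_⟩
      · rw [hgx] at hz
        injection hz with hz
        rw [h1, hz]
      · rw [hgx] at hn
        cases hn
    · refine ⟨fun z hz => ?_, fun hn => ?_⟩
      · rw [hgy] at hz
        injection hz with hz
        rw [h2, hz]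
      · rw [hgy] at hn
        cases hn

def asg5 (a b : V3) : sig5.Assignment := fun i =>
  if i = X5 then a else b

lemma asg5_X (a b : V3) : asg5 a b X5 = a := by simp [asg5]; rfl

lemma asg5_Y (a b : V3) : asg5 a b Y5 = b := by
  have : ¬ (Y5 = X5) := by decide
  simp [asg5, this]; rfl

theorem nonrecursive_model_with_unique_solutions :
    ¬ model5.Recursive ∧
    model5.UniqueSolutions ∧
    (∀ (u : sig5.Context) (v : sig5.Assignment),
      model5.IsSolution sig5.emptyInt u v ↔ (v X5 = zero5 ∧ v Y5 = zero5)) ∧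
    (∀ (u : sig5.Context) (x : V3) (v : sig5.Assignment),
      model5.IsSolution (setInt5 X5 x) u v ↔ (v X5 = x ∧ v Y5 = neg5 x)) ∧
    (∀ (u : sig5.Context) (y : V3) (v : sig5.Assignment),
      model5.IsSolution (setInt5 Y5 y) u v ↔ (v Y5 = y ∧ v X5 = y)) := by
  refine ⟨?_, ?_, sol_empty, sol_setX, sol_setY⟩
  · rintro ⟨r, hsto, hind⟩
    have u : sig5.Context := fun e => e.elim
    have hz1 : zero5 ≠ one5 := by decide
    rcases (haveI := hsto; trichotomous_of (r := r) X5 Y5) with h | h | h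
    · have hd := hind X5 u (fun _ _ => zero5) (fun _ _ => one5)
        (by
          intro Y hY hnr
          rcases var_cases Y with rfl | rfl
          · exact absurd rfl hY
          · exact absurd h hnr)
      have hd : zero5 = one5 := (F_X5 u _).symm.trans (hd.trans (F_X5 u _))
      exact hz1 hd
    · exact absurd h (by decide)
    · have hd := hind Y5 u (fun _ _ => zero5) (fun _ _ => one5)
        (by
          intro Y hY hnr
          rcases var_cases Y with rfl | rfl
          · exact absurd h hnr
          · exact absurd rfl hY)
      have hd : neg5 zero5 = neg5 one5 := (F_Y5 u _).symm.trans (hd.trans (F_Y5 u _))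
      exact absurd hd (show neg5 zero5 ≠ neg5 one5 by decide)
  · intro g u
    rcases hgx : g X5 with _ | x <;> rcases hgy : g Y5 with _ | y
    · have hg : g = sig5.emptyInt := by
        funext i
        rcases var_cases i with rfl | rfl
        · exact hgx
        · exact hgy
      subst hg
      refine ⟨asg5 zero5 zero5, (sol_empty u _).2 ⟨asg5_X _ _, asg5_Y _ _⟩,
        fun v hv => ?_⟩
      obtain ⟨h1, h2⟩ := (sol_empty u v).1 hv
      exact asg_ext _ _ (by rw [h1, asg5_X]) (by rw [h2, asg5_Y])
    · have hg : g = setInt5 Y5 y := by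
        funext i
        rcases var_cases i with rfl | rfl
        · rw [hgx]; exact (setInt5_YX y).symm
        · rw [hgy]; exact (setInt5_same Y5 y).symm
      subst hg
      refine ⟨asg5 y y, (sol_setY u y _).2 ⟨asg5_Y _ _, asg5_X _ _⟩,
        fun v hv => ?_⟩
      obtain ⟨h1, h2⟩ := (sol_setY u y v).1 hv
      exact asg_ext _ _ (by rw [h2]; exact (asg5_X _ _).symm) (by rw [h1]; exact (asg5_Y _ _).symm)
    · have hg : g = setInt5 X5 x := by
        funext i
        rcases var_cases i with rfl | rfl
        · rw [hgx]; exact (setInt5_same X5 x).symm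
        · rw [hgy]; exact (setInt5_XY x).symm
      subst hg
      refine ⟨asg5 x (neg5 x), (sol_setX u x _).2 ⟨asg5_X _ _, asg5_Y _ _⟩,
        fun v hv => ?_⟩
      obtain ⟨h1, h2⟩ := (sol_setX u x v).1 hv
      exact asg_ext _ _ (by rw [h1]; exact (asg5_X _ _).symm) (by rw [h2]; exact (asg5_Y _ _).symm)
    · refine ⟨asg5 x y, (sol_both g x y hgx hgy u _).2 ⟨asg5_X _ _, asg5_Y _ _⟩,
        fun v hv => ?_⟩
      obtain ⟨h1, h2⟩ := (sol_both g x y hgx hgy u v).1 hv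
      exact asg_ext _ _ (by rw [h1]; exact (asg5_X _ _).symm) (by rw [h2]; exact (asg5_Y _ _).symm)
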